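/- arXiv:2005.14295 — 4 statements merged into one kernel-verified Lean document; each statement's English description precedes it below -/
import Mathlib

section
/- Let (E₁, M₁), …, (E_k, M_k) be orthogonal factorization systems on a category C forming a chain, i.e. M_j ⊆ M_{j+1} for 1 ≤ j ≤ k−1 (equivalently E_{j+1} ⊆ E_j). Then every morphism f : X ⟶ Y of C can be factored as a composite f = f₀ ∘ f₁ ∘ ⋯ ∘ f_k of k+1 morphisms, where the first morphism f_k lies in E_k, the last morphism f₀ lies in M₁, and the intermediate morphisms satisfy f_j ∈ E_j ∩ M_{j+1} for 1 ≤ j ≤ k−1; moreover such a factorization is unique up to isomorphism (any two such factorizations are related by isomorphisms of the intermediate objects commuting with all the morphisms). -/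
open CategoryTheory

universe v u

/-- Strong orthogonality `e ⊥ m`: every commutative square `u ≫ m = e ≫ v` admits a
unique diagonal filler. -/
def Orth {C : Type u} [Category.{v} C] {A B X Y : C} (e : A ⟶ B) (m : X ⟶ Y) : Prop :=
  ∀ (u : A ⟶ X) (v : B ⟶ Y), u ≫ m = e ≫ v → ∃! d : B ⟶ X, e ≫ d = u ∧ d ≫ m = v

/-- `(E, M)` is an orthogonal factorization system. -/
structure IsOFS {C : Type u} [Category.{v} C] (E M : MorphismProperty C) : Prop where
  iso_mem_E : ∀ {X Y : C} (f : X ⟶ Y), IsIso f → E f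
  iso_mem_M : ∀ {X Y : C} (f : X ⟶ Y), IsIso f → M f
  comp_mem_E : ∀ {X Y Z : C} (f : X ⟶ Y) (g : Y ⟶ Z), E f → E g → E (f ≫ g)
  comp_mem_M : ∀ {X Y Z : C} (f : X ⟶ Y) (g : Y ⟶ Z), M f → M g → M (f ≫ g)
  fact : ∀ {X Y : C} (f : X ⟶ Y),
    ∃ (F : C) (e : X ⟶ F) (m : F ⟶ Y), E e ∧ M m ∧ e ≫ m = f
  orth : ∀ {A B X Y : C} (e : A ⟶ B) (m : X ⟶ Y), E e → M m → Orth e m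

/-- Composite `Z (j+1) ⟶ Z j ⟶ ⋯ ⟶ Z 1` of a chain of morphisms
`g j : Z (j+2) ⟶ Z (j+1)`. -/
def chainComp {C : Type u} [Category.{v} C] (Z : ℕ → C)
    (g : ∀ j : ℕ, Z (j + 2) ⟶ Z (j + 1)) : ∀ j : ℕ, (Z (j + 1) ⟶ Z 1)
  | 0 => 𝟙 (Z 1)
  | j + 1 => g j ≫ chainComp Z g j

section Helpers

variable {C : Type u} [Category.{v} C]

lemma isOFS_iso_top : IsOFS (MorphismProperty.isomorphisms C) (⊤ : MorphismProperty C) := by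
  constructor
  · intro X Y f hf; exact hf
  · intro X Y f _; trivial
  · intro X Y Z f g hf hg
    have : IsIso f := hf
    have : IsIso g := hg
    exact inferInstanceAs (IsIso (f ≫ g))
  · intro _ _ _ _ _ _ _; trivial
  · intro X Y f; exact ⟨X, 𝟙 X, f, inferInstanceAs (IsIso (𝟙 X)), trivial, Category.id_comp f⟩
  · intro A B X Y e m he _ u v hsq
    have : IsIso e := he
    refine ⟨inv e ≫ u, ⟨by simp, by simp [Category.assoc, hsq]⟩, ?_⟩
    intro d ⟨hd1, _⟩
    rw [← hd1]; simp

/-- If `f` is orthogonal to every element of `M`, then `f ∈ E`. -/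
lemma E_of_orth {E M : MorphismProperty C} (h : IsOFS E M) {X Y : C} (f : X ⟶ Y)
    (horth : ∀ {A B : C} (m : A ⟶ B), M m → Orth f m) : E f := by
  obtain ⟨F, e, m, he, hm, hfac⟩ := h.fact f
  obtain ⟨d, ⟨hd1, hd2⟩, _⟩ := horth m hm e (𝟙 Y) (by simp [hfac])
  -- show m ≫ d = 𝟙 F
  obtain ⟨d', _, huniq⟩ := h.orth e m he hm e m rfl
  have h1 : m ≫ d = 𝟙 F := by
    have e1 : m ≫ d = d' := huniq (m ≫ d)
      ⟨by rw [← Category.assoc, hfac, hd1], by rw [Category.assoc, hd2, Category.comp_id]⟩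
    have e2 : 𝟙 F = d' := huniq (𝟙 F) ⟨Category.comp_id e, Category.id_comp m⟩
    rw [e1, ← e2]
  have : IsIso m := ⟨d, ⟨h1, hd2⟩⟩
  rw [← hfac]
  exact h.comp_mem_E e m he (h.iso_mem_E m this)

/-- Left cancellation for the left class. -/
lemma E_cancel {E M : MorphismProperty C} (h : IsOFS E M) {X Y Z : C} {f : X ⟶ Y} {g : Y ⟶ Z}
    (hfg : E (f ≫ g)) (hf : E f) : E g := by
  refine E_of_orth h g (fun {A B} m hm => ?_)
  intro u v hsq
  obtain ⟨d, ⟨hd1, hd2⟩, huniq⟩ := h.orth (f ≫ g) m hfg hm (f ≫ u) v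
    (by rw [Category.assoc, hsq, Category.assoc])
  have hgd : g ≫ d = u := by
    obtain ⟨d0, _, huniq0⟩ := h.orth f m hf hm (f ≫ u) (g ≫ v)
      (by rw [Category.assoc, hsq])
    have e1 : g ≫ d = d0 := huniq0 (g ≫ d)
      ⟨by rw [← Category.assoc]; exact hd1, by rw [Category.assoc, hd2]⟩
    have e2 : u = d0 := huniq0 u ⟨rfl, hsq⟩
    rw [e1, ← e2]
  refine ⟨d, ⟨hgd, hd2⟩, ?_⟩
  intro d' ⟨hd'1, hd'2⟩
  exact huniq d' ⟨by rw [Category.assoc, hd'1], hd'2⟩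

/-- Uniqueness of `(E,M)`-factorizations up to isomorphism. -/
lemma fact_unique {E M : MorphismProperty C} (h : IsOFS E M) {X Y B B' : C}
    {e : X ⟶ B} {m : B ⟶ Y} {e' : X ⟶ B'} {m' : B' ⟶ Y}
    (he : E e) (hm : M m) (he' : E e') (hm' : M m') (hfac : e ≫ m = e' ≫ m') :
    ∃ φ : B ≅ B', e ≫ φ.hom = e' ∧ φ.hom ≫ m' = m := by
  obtain ⟨d, ⟨hd1, hd2⟩, _⟩ := h.orth e m' he hm' e' m hfac.symm
  obtain ⟨d', ⟨hd'1, hd'2⟩, _⟩ := h.orth e' m he' hm e m' hfac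
  obtain ⟨w, _, huniq⟩ := h.orth e m he hm e m rfl
  obtain ⟨w', _, huniq'⟩ := h.orth e' m' he' hm' e' m' rfl
  have hdd' : d ≫ d' = 𝟙 B := by
    have e1 : d ≫ d' = w := huniq (d ≫ d')
      ⟨by rw [← Category.assoc, hd1, hd'1], by rw [Category.assoc, hd'2, hd2]⟩
    have e2 : 𝟙 B = w := huniq (𝟙 B) ⟨Category.comp_id e, Category.id_comp m⟩
    rw [e1, ← e2]
  have hd'd : d' ≫ d = 𝟙 B' := by
    have e1 : d' ≫ d = w' := huniq' (d' ≫ d)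
      ⟨by rw [← Category.assoc, hd'1, hd1], by rw [Category.assoc, hd2, hd'2]⟩
    have e2 : 𝟙 B' = w' := huniq' (𝟙 B') ⟨Category.comp_id e', Category.id_comp m'⟩
    rw [e1, ← e2]
  exact ⟨⟨d, d', hdd', hd'd⟩, hd1, hd2⟩

end Helpers

section Seq

variable {C : Type u} [Category.{v} C] {E M : ℕ → MorphismProperty C}

/-- The tower of objects obtained by repeatedly factoring the `E`-part. -/
noncomputable def seqObj (hOFS : ∀ j : ℕ, IsOFS (E j) (M j)) {X Y : C} (f : X ⟶ Y) :
    ℕ → Σ' Z : C, X ⟶ Z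
  | 0 => ⟨Y, f⟩
  | j + 1 =>
    ⟨((hOFS (j + 1)).fact (seqObj hOFS f j).2).choose,
      ((hOFS (j + 1)).fact (seqObj hOFS f j).2).choose_spec.choose⟩

/-- The connecting morphisms of the tower. -/
noncomputable def seqConn (hOFS : ∀ j : ℕ, IsOFS (E j) (M j)) {X Y : C} (f : X ⟶ Y) (j : ℕ) :
    (seqObj hOFS f (j + 1)).1 ⟶ (seqObj hOFS f j).1 :=
  ((hOFS (j + 1)).fact (seqObj hOFS f j).2).choose_spec.choose_spec.choose

lemma seq_spec (hOFS : ∀ j : ℕ, IsOFS (E j) (M j)) {X Y : C} (f : X ⟶ Y) (j : ℕ) :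
    E (j + 1) (seqObj hOFS f (j + 1)).2 ∧ M (j + 1) (seqConn hOFS f j) ∧
      (seqObj hOFS f (j + 1)).2 ≫ seqConn hOFS f j = (seqObj hOFS f j).2 :=
  ((hOFS (j + 1)).fact (seqObj hOFS f j).2).choose_spec.choose_spec.choose_spec

lemma master_exists (hOFS : ∀ j : ℕ, IsOFS (E j) (M j))
    (hchain : ∀ (j : ℕ) {X Y : C} (f : X ⟶ Y), M j f → M (j + 1) f)
    (n : ℕ) {X Y : C} (f : X ⟶ Y) :
    ∃ (Z : ℕ → C) (e : X ⟶ Z (n + 1)) (g : ∀ j : ℕ, Z (j + 2) ⟶ Z (j + 1))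
        (m : Z 1 ⟶ Y),
        E (n + 1) e ∧ M 1 m ∧
        (∀ j : ℕ, j < n → E (j + 1) (g j) ∧ M (j + 2) (g j)) ∧
        e ≫ chainComp Z g n ≫ m = f := by
  have hE_anti : ∀ (j k : ℕ) {A B : C} (u : A ⟶ B), j ≤ k → E k u → E j u := by
    intro j k A B u hjk hu
    have hM_mono : ∀ {A' B' : C} (w : A' ⟶ B'), M j w → M k w := by
      intro A' B' w hw
      clear hu
      induction k, hjk using Nat.le_induction with
      | base => exact hw
      | succ k _ ih => exact hchain k _ ih
    exact E_of_orth (hOFS j) u (fun {A' B'} w hw => (hOFS k).orth u w hu (hM_mono w hw))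
  refine ⟨fun j => (seqObj hOFS f j).1, (seqObj hOFS f (n + 1)).2,
    fun j => seqConn hOFS f (j + 1), seqConn hOFS f 0,
    (seq_spec hOFS f n).1, (seq_spec hOFS f 0).2.1, ?_, ?_⟩
  · intro j _
    refine ⟨?_, (seq_spec hOFS f (j + 1)).2.1⟩
    exact E_cancel (hOFS (j + 1))
      (by rw [(seq_spec hOFS f (j + 1)).2.2]; exact (seq_spec hOFS f j).1)
      (hE_anti (j + 1) (j + 2) _ (Nat.le_succ _) (seq_spec hOFS f (j + 1)).1)
  · induction n with
    | zero =>
      show (seqObj hOFS f 1).2 ≫ 𝟙 _ ≫ seqConn hOFS f 0 = f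
      rw [Category.id_comp]
      exact (seq_spec hOFS f 0).2.2
    | succ k ih =>
      show (seqObj hOFS f (k + 2)).2 ≫ (seqConn hOFS f (k + 1) ≫ _) ≫ seqConn hOFS f 0 = f
      rw [← Category.assoc, ← Category.assoc, (seq_spec hOFS f (k + 1)).2.2]
      rw [Category.assoc]
      exact ih

end Seq

section Mono

variable {C : Type u} [Category.{v} C] {E M : ℕ → MorphismProperty C}

lemma M_mono (hchain : ∀ (j : ℕ) {X Y : C} (f : X ⟶ Y), M j f → M (j + 1) f)
    {j k : ℕ} (hjk : j ≤ k) {A B : C} {u : A ⟶ B} (hu : M j u) : M k u := by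
  induction k, hjk using Nat.le_induction with
  | base => exact hu
  | succ k _ ih => exact hchain k _ ih

lemma E_anti (hOFS : ∀ j : ℕ, IsOFS (E j) (M j))
    (hchain : ∀ (j : ℕ) {X Y : C} (f : X ⟶ Y), M j f → M (j + 1) f)
    {j k : ℕ} (hjk : j ≤ k) {A B : C} {u : A ⟶ B} (hu : E k u) : E j u :=
  E_of_orth (hOFS j) u (fun {A' B'} w hw => (hOFS k).orth u w hu (M_mono hchain hjk hw))

lemma chainCompM (hOFS : ∀ j : ℕ, IsOFS (E j) (M j))
    (hchain : ∀ (j : ℕ) {X Y : C} (f : X ⟶ Y), M j f → M (j + 1) f)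
    (Z : ℕ → C) (g : ∀ j : ℕ, Z (j + 2) ⟶ Z (j + 1)) {Y : C} (m : Z 1 ⟶ Y)
    (hm : M 1 m) : ∀ k : ℕ, (∀ j : ℕ, j < k → M (j + 2) (g j)) →
      M (k + 1) (chainComp Z g k ≫ m)
  | 0, _ => by
    show M 1 (𝟙 (Z 1) ≫ m)
    rw [Category.id_comp]; exact hm
  | k + 1, hg => by
    show M (k + 2) ((g k ≫ chainComp Z g k) ≫ m)
    rw [Category.assoc]
    exact (hOFS (k + 2)).comp_mem_M _ _ (hg k (Nat.lt_succ_self k))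
      (M_mono hchain (Nat.le_succ (k + 1))
        (chainCompM hOFS hchain Z g m hm k (fun j hj => hg j (Nat.lt_succ_of_lt hj))))

end Mono

section Unique

universe w

/-- Extend a family over `Fin (n+1)` by one more value at the top index. -/
def finSnoc {n : ℕ} {motive : Fin (n + 1) → Sort w}
    (cst : ∀ (jv : ℕ) (h : jv < n), motive ⟨jv, Nat.lt_succ_of_lt h⟩)
    (lst : motive ⟨n, Nat.lt_succ_self n⟩) (j : Fin (n + 1)) : motive j :=
  if h : j.val < n then cst j.val h
  else
    have hj : (⟨n, Nat.lt_succ_self n⟩ : Fin (n + 1)) = j :=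
      Fin.ext (Nat.le_antisymm (Nat.le_of_not_lt h) (Nat.le_of_lt_succ j.isLt))
    hj ▸ lst

lemma finSnoc_last {n : ℕ} {motive : Fin (n + 1) → Sort w}
    (cst : ∀ (jv : ℕ) (h : jv < n), motive ⟨jv, Nat.lt_succ_of_lt h⟩)
    (lst : motive ⟨n, Nat.lt_succ_self n⟩) (h' : n < n + 1) :
    finSnoc cst lst ⟨n, h'⟩ = lst := by
  rw [finSnoc, dif_neg (Nat.lt_irrefl n)]

lemma finSnoc_lt {n : ℕ} {motive : Fin (n + 1) → Sort w}
    (cst : ∀ (jv : ℕ) (h : jv < n), motive ⟨jv, Nat.lt_succ_of_lt h⟩)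
    (lst : motive ⟨n, Nat.lt_succ_self n⟩) {jv : ℕ} (h : jv < n) (h' : jv < n + 1) :
    finSnoc cst lst ⟨jv, h'⟩ = cst jv h := dif_pos h

variable {C : Type u} [Category.{v} C] {E M : ℕ → MorphismProperty C}

lemma master_unique (hOFS : ∀ j : ℕ, IsOFS (E j) (M j))
    (hchain : ∀ (j : ℕ) {X Y : C} (f : X ⟶ Y), M j f → M (j + 1) f) :
    ∀ (n : ℕ) {X Y : C} (f : X ⟶ Y)
      (Z Z' : ℕ → C) (e : X ⟶ Z (n + 1)) (e' : X ⟶ Z' (n + 1))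
      (g : ∀ j : ℕ, Z (j + 2) ⟶ Z (j + 1)) (g' : ∀ j : ℕ, Z' (j + 2) ⟶ Z' (j + 1))
      (m : Z 1 ⟶ Y) (m' : Z' 1 ⟶ Y),
      E (n + 1) e → M 1 m →
      (∀ j : ℕ, j < n → E (j + 1) (g j) ∧ M (j + 2) (g j)) →
      e ≫ chainComp Z g n ≫ m = f →
      E (n + 1) e' → M 1 m' →
      (∀ j : ℕ, j < n → E (j + 1) (g' j) ∧ M (j + 2) (g' j)) →
      e' ≫ chainComp Z' g' n ≫ m' = f →
      ∃ h : ∀ j : Fin (n + 1), Z (j.val + 1) ≅ Z' (j.val + 1),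
        e ≫ (h ⟨n, Nat.lt_succ_self n⟩).hom = e' ∧
        (h ⟨0, Nat.succ_pos n⟩).hom ≫ m' = m ∧
        ∀ (j : ℕ) (hj : j < n),
          g j ≫ (h ⟨j, Nat.lt_succ_of_lt hj⟩).hom =
            (h ⟨j + 1, Nat.succ_lt_succ hj⟩).hom ≫ g' j := by
  intro n
  induction n with
  | zero =>
    intro X Y f Z Z' e e' g g' m m' he hm _ hfac he' hm' _ hfac'
    have h1 : e ≫ m = e' ≫ m' := by
      have h2 : e ≫ 𝟙 (Z 1) ≫ m = f := hfac
      have h3 : e' ≫ 𝟙 (Z' 1) ≫ m' = f := hfac'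
      rw [Category.id_comp] at h2 h3
      rw [h2, h3]
    obtain ⟨φ, hφ1, hφ2⟩ := fact_unique (hOFS 1) he hm he' hm' h1
    refine ⟨finSnoc (motive := fun j : Fin 1 => Z ((j : ℕ) + 1) ≅ Z' ((j : ℕ) + 1))
      (fun jv hlt => absurd hlt (Nat.not_lt_zero jv)) φ, ?_, ?_, ?_⟩
    · rw [finSnoc_last]; exact hφ1
    · rw [finSnoc_last]; exact hφ2
    · intro j hj; exact absurd hj (Nat.not_lt_zero j)
  | succ n ih =>
    intro X Y f Z Z' e e' g g' m m' he hm hg hfac he' hm' hg' hfac'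
    simp only [chainComp, Category.assoc] at hfac hfac'
    have hGn : E (n + 1) (g n) := (hg n (Nat.lt_succ_self n)).1
    have hGn' : E (n + 1) (g' n) := (hg' n (Nat.lt_succ_self n)).1
    have heE : E (n + 1) e := E_anti hOFS hchain (Nat.le_succ (n + 1)) he
    have heE' : E (n + 1) e' := E_anti hOFS hchain (Nat.le_succ (n + 1)) he'
    have hfac2 : (e ≫ g n) ≫ chainComp Z g n ≫ m = f := by
      rw [Category.assoc]; exact hfac
    have hfac2' : (e' ≫ g' n) ≫ chainComp Z' g' n ≫ m' = f := by
      rw [Category.assoc]; exact hfac'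
    obtain ⟨h, hh1, hh2, hh3⟩ := ih f Z Z' (e ≫ g n) (e' ≫ g' n) g g' m m'
      ((hOFS (n + 1)).comp_mem_E _ _ heE hGn) hm
      (fun j hj => hg j (Nat.lt_succ_of_lt hj)) hfac2
      ((hOFS (n + 1)).comp_mem_E _ _ heE' hGn') hm'
      (fun j hj => hg' j (Nat.lt_succ_of_lt hj)) hfac2'
    -- the isomorphisms commute with the composites down to `Y`
    have hB : ∀ (j : ℕ) (hj : j < n + 1),
        (h ⟨j, hj⟩).hom ≫ chainComp Z' g' j ≫ m' = chainComp Z g j ≫ m := by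
      intro j
      induction j with
      | zero =>
        intro hj
        show (h ⟨0, hj⟩).hom ≫ 𝟙 (Z' 1) ≫ m' = 𝟙 (Z 1) ≫ m
        rw [Category.id_comp, Category.id_comp]
        exact hh2
      | succ j ihj =>
        intro hj
        have hjn : j < n := Nat.lt_of_succ_lt_succ hj
        show (h ⟨j + 1, hj⟩).hom ≫ (g' j ≫ chainComp Z' g' j) ≫ m' =
          (g j ≫ chainComp Z g j) ≫ m
        rw [Category.assoc, ← Category.assoc ((h ⟨j + 1, hj⟩).hom), ← hh3 j hjn,
          Category.assoc, ihj (Nat.lt_succ_of_lt hjn), Category.assoc]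
    -- membership facts for the long composites
    have hMn : M (n + 1) (chainComp Z g n ≫ m) :=
      chainCompM hOFS hchain Z g m hm n
        (fun j hj => (hg j (Nat.lt_succ_of_lt hj)).2)
    have hMn' : M (n + 1) (chainComp Z' g' n ≫ m') :=
      chainCompM hOFS hchain Z' g' m' hm' n
        (fun j hj => (hg' j (Nat.lt_succ_of_lt hj)).2)
    have hMbig : M (n + 2) (g n ≫ chainComp Z g n ≫ m) :=
      (hOFS (n + 2)).comp_mem_M _ _ (hg n (Nat.lt_succ_self n)).2
        (M_mono hchain (Nat.le_succ (n + 1)) hMn)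
    have hMbig' : M (n + 2) (g' n ≫ chainComp Z' g' n ≫ m') :=
      (hOFS (n + 2)).comp_mem_M _ _ (hg' n (Nat.lt_succ_self n)).2
        (M_mono hchain (Nat.le_succ (n + 1)) hMn')
    -- the top isomorphism
    obtain ⟨H, hH1, hH2⟩ := fact_unique (hOFS (n + 2)) he hMbig he' hMbig'
      (by rw [hfac, hfac'])
    -- commutation of the top square
    have hcomm : g n ≫ (h ⟨n, Nat.lt_succ_self n⟩).hom = H.hom ≫ g' n := by
      obtain ⟨d, _, huniq⟩ := (hOFS (n + 1)).orth e (chainComp Z' g' n ≫ m') heE hMn'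
        (e' ≫ g' n) (g n ≫ chainComp Z g n ≫ m)
        (by simp only [Category.assoc]; rw [hfac', hfac])
      have e1 : g n ≫ (h ⟨n, Nat.lt_succ_self n⟩).hom = d := by
        refine huniq _ ⟨?_, ?_⟩
        · rw [← Category.assoc]; exact hh1
        · rw [Category.assoc, hB n (Nat.lt_succ_self n)]
      have e2 : H.hom ≫ g' n = d := by
        refine huniq _ ⟨?_, ?_⟩
        · rw [← Category.assoc, hH1]
        · rw [Category.assoc]; exact hH2
      rw [e1, e2]
    -- assemble the family of isomorphisms
    refine ⟨finSnoc (motive := fun j : Fin (n + 2) => Z ((j : ℕ) + 1) ≅ Z' ((j : ℕ) + 1))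
      (fun jv hlt => h ⟨jv, hlt⟩) H, ?_, ?_, ?_⟩
    · have hrw : finSnoc (motive := fun j : Fin (n + 2) => Z ((j : ℕ) + 1) ≅ Z' ((j : ℕ) + 1))
          (fun jv hlt => h ⟨jv, hlt⟩) H ⟨n + 1, Nat.lt_succ_self (n + 1)⟩ = H :=
        finSnoc_last (motive := fun j : Fin (n + 2) => Z ((j : ℕ) + 1) ≅ Z' ((j : ℕ) + 1))
          (fun jv hlt => h ⟨jv, hlt⟩) H _
      rw [hrw]; exact hH1
    · have hrw : finSnoc (motive := fun j : Fin (n + 2) => Z ((j : ℕ) + 1) ≅ Z' ((j : ℕ) + 1))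
          (fun jv hlt => h ⟨jv, hlt⟩) H ⟨0, Nat.succ_pos (n + 1)⟩ =
          h ⟨0, Nat.succ_pos n⟩ :=
        finSnoc_lt (motive := fun j : Fin (n + 2) => Z ((j : ℕ) + 1) ≅ Z' ((j : ℕ) + 1))
          (fun jv hlt => h ⟨jv, hlt⟩) H (Nat.succ_pos n) _
      rw [hrw]; exact hh2
    · intro j hj
      rcases Nat.lt_or_ge j n with hjn | hjn
      · have hrw1 : finSnoc (motive := fun i : Fin (n + 2) => Z ((i : ℕ) + 1) ≅ Z' ((i : ℕ) + 1))
            (fun jv hlt => h ⟨jv, hlt⟩) H ⟨j, Nat.lt_succ_of_lt hj⟩ =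
            h ⟨j, Nat.lt_succ_of_lt hjn⟩ :=
          finSnoc_lt (motive := fun i : Fin (n + 2) => Z ((i : ℕ) + 1) ≅ Z' ((i : ℕ) + 1))
            (fun jv hlt => h ⟨jv, hlt⟩) H (Nat.lt_succ_of_lt hjn) _
        have hrw2 : finSnoc (motive := fun i : Fin (n + 2) => Z ((i : ℕ) + 1) ≅ Z' ((i : ℕ) + 1))
            (fun jv hlt => h ⟨jv, hlt⟩) H ⟨j + 1, Nat.succ_lt_succ hj⟩ =
            h ⟨j + 1, Nat.succ_lt_succ hjn⟩ :=
          finSnoc_lt (motive := fun i : Fin (n + 2) => Z ((i : ℕ) + 1) ≅ Z' ((i : ℕ) + 1))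
            (fun jv hlt => h ⟨jv, hlt⟩) H (Nat.succ_lt_succ hjn) _
        rw [hrw1, hrw2]
        exact hh3 j hjn
      · have hjn' : j = n := Nat.le_antisymm (Nat.lt_succ_iff.mp hj) hjn
        subst hjn'
        have hrw1 : finSnoc (motive := fun i : Fin (j + 2) => Z ((i : ℕ) + 1) ≅ Z' ((i : ℕ) + 1))
            (fun jv hlt => h ⟨jv, hlt⟩) H ⟨j, Nat.lt_succ_of_lt hj⟩ =
            h ⟨j, Nat.lt_succ_self j⟩ :=
          finSnoc_lt (motive := fun i : Fin (j + 2) => Z ((i : ℕ) + 1) ≅ Z' ((i : ℕ) + 1))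
            (fun jv hlt => h ⟨jv, hlt⟩) H (Nat.lt_succ_self j) _
        have hrw2 : finSnoc (motive := fun i : Fin (j + 2) => Z ((i : ℕ) + 1) ≅ Z' ((i : ℕ) + 1))
            (fun jv hlt => h ⟨jv, hlt⟩) H ⟨j + 1, Nat.succ_lt_succ hj⟩ = H :=
          finSnoc_last (motive := fun i : Fin (j + 2) => Z ((i : ℕ) + 1) ≅ Z' ((i : ℕ) + 1))
            (fun jv hlt => h ⟨jv, hlt⟩) H _
        rw [hrw1, hrw2]
        exact hcomm

end Unique

section Extend

variable {C : Type u} [Category.{v} C]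

/-- Extend a partially specified chain of classes to all of `ℕ`. -/
def extE (E : ℕ → MorphismProperty C) (n : ℕ) : ℕ → MorphismProperty C := fun j =>
  if 1 ≤ j ∧ j ≤ n + 1 then E j else if j = 0 then E 1 else MorphismProperty.isomorphisms C

def extM (M : ℕ → MorphismProperty C) (n : ℕ) : ℕ → MorphismProperty C := fun j =>
  if 1 ≤ j ∧ j ≤ n + 1 then M j else if j = 0 then M 1 else ⊤

lemma extE_eq (E : ℕ → MorphismProperty C) (n : ℕ) {j : ℕ} (h1 : 1 ≤ j) (h2 : j ≤ n + 1) :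
    extE E n j = E j := if_pos ⟨h1, h2⟩

lemma extM_eq (M : ℕ → MorphismProperty C) (n : ℕ) {j : ℕ} (h1 : 1 ≤ j) (h2 : j ≤ n + 1) :
    extM M n j = M j := if_pos ⟨h1, h2⟩

lemma extOFS {E M : ℕ → MorphismProperty C} (n : ℕ)
    (hOFS : ∀ j : ℕ, 1 ≤ j → j ≤ n + 1 → IsOFS (E j) (M j)) :
    ∀ j : ℕ, IsOFS (extE E n j) (extM M n j) := by
  intro j
  by_cases h1 : 1 ≤ j ∧ j ≤ n + 1
  · rw [extE_eq E n h1.1 h1.2, extM_eq M n h1.1 h1.2]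
    exact hOFS j h1.1 h1.2
  · by_cases h0 : j = 0
    · rw [show extE E n j = E 1 by rw [extE, if_neg h1, if_pos h0],
        show extM M n j = M 1 by rw [extM, if_neg h1, if_pos h0]]
      exact hOFS 1 le_rfl (Nat.le_add_left 1 n)
    · rw [show extE E n j = MorphismProperty.isomorphisms C by rw [extE, if_neg h1, if_neg h0],
        show extM M n j = ⊤ by rw [extM, if_neg h1, if_neg h0]]
      exact isOFS_iso_top

lemma extChain {M : ℕ → MorphismProperty C} (n : ℕ)
    (hchain : ∀ j : ℕ, 1 ≤ j → j ≤ n → ∀ {X Y : C} (f : X ⟶ Y), M j f → M (j + 1) f) :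
    ∀ (j : ℕ) {X Y : C} (u : X ⟶ Y), extM M n j u → extM M n (j + 1) u := by
  intro j X Y u hu
  by_cases h1 : j + 1 ≤ n + 1
  · rw [extM_eq M n (Nat.succ_le_succ (Nat.zero_le j)) h1]
    rcases Nat.eq_zero_or_pos j with h0 | hj1
    · subst h0
      rwa [show extM M n 0 = M 1 by
        rw [extM, if_neg (by omega), if_pos rfl]] at hu
    · rw [extM_eq M n hj1 (by omega)] at hu
      exact hchain j hj1 (by omega) u hu
  · rw [show extM M n (j + 1) = ⊤ by rw [extM, if_neg (by omega), if_neg (by omega)]]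
    trivial

end Extend


/-- with `k = n + 1 ≥ 1`: given a chain of orthogonal factorization
systems `(E 1, M 1) ⪯ ⋯ ⪯ (E (n+1), M (n+1))` (i.e. `M j ⊆ M (j+1)`), every morphism
`f : X ⟶ Y` factors as `X ⟶ Z (n+1) ⟶ ⋯ ⟶ Z 1 ⟶ Y` where the first morphism lies in
`E (n+1)`, the last lies in `M 1`, and the intermediate ones lie in `E (j+1) ∩ M (j+2)`;
moreover such a factorization is unique up to isomorphisms of the intermediate objects
commuting with all the morphisms. -/
theorem k_fold_factorization {C : Type u} [Category.{v} C] (n : ℕ)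
    (E M : ℕ → MorphismProperty C)
    (hOFS : ∀ j : ℕ, 1 ≤ j → j ≤ n + 1 → IsOFS (E j) (M j))
    (hchain : ∀ j : ℕ, 1 ≤ j → j ≤ n → ∀ {X Y : C} (f : X ⟶ Y), M j f → M (j + 1) f)
    {X Y : C} (f : X ⟶ Y) :
    (∃ (Z : ℕ → C) (e : X ⟶ Z (n + 1)) (g : ∀ j : ℕ, Z (j + 2) ⟶ Z (j + 1))
        (m : Z 1 ⟶ Y),
        E (n + 1) e ∧ M 1 m ∧
        (∀ j : ℕ, j < n → E (j + 1) (g j) ∧ M (j + 2) (g j)) ∧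
        e ≫ chainComp Z g n ≫ m = f) ∧
    (∀ (Z Z' : ℕ → C) (e : X ⟶ Z (n + 1)) (e' : X ⟶ Z' (n + 1))
        (g : ∀ j : ℕ, Z (j + 2) ⟶ Z (j + 1)) (g' : ∀ j : ℕ, Z' (j + 2) ⟶ Z' (j + 1))
        (m : Z 1 ⟶ Y) (m' : Z' 1 ⟶ Y),
        E (n + 1) e → M 1 m →
        (∀ j : ℕ, j < n → E (j + 1) (g j) ∧ M (j + 2) (g j)) →
        e ≫ chainComp Z g n ≫ m = f →
        E (n + 1) e' → M 1 m' →
        (∀ j : ℕ, j < n → E (j + 1) (g' j) ∧ M (j + 2) (g' j)) →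
        e' ≫ chainComp Z' g' n ≫ m' = f →
        ∃ h : ∀ j : Fin (n + 1), Z (j.val + 1) ≅ Z' (j.val + 1),
          e ≫ (h ⟨n, Nat.lt_succ_self n⟩).hom = e' ∧
          (h ⟨0, Nat.succ_pos n⟩).hom ≫ m' = m ∧
          ∀ (j : ℕ) (hj : j < n),
            g j ≫ (h ⟨j, Nat.lt_succ_of_lt hj⟩).hom =
              (h ⟨j + 1, Nat.succ_lt_succ hj⟩).hom ≫ g' j) := by
  have hOFS' := extOFS n hOFS
  have hchain' := extChain n hchain
  have hEeq : ∀ (j : ℕ), 1 ≤ j → j ≤ n + 1 → extE E n j = E j := fun _ h1 h2 => extE_eq E n h1 h2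
  have hMeq : ∀ (j : ℕ), 1 ≤ j → j ≤ n + 1 → extM M n j = M j := fun _ h1 h2 => extM_eq M n h1 h2
  constructor
  · obtain ⟨Z, e, g, m, he, hm, hg, hfac⟩ := master_exists hOFS' hchain' n f
    refine ⟨Z, e, g, m, ?_, ?_, ?_, hfac⟩
    · rwa [hEeq (n + 1) (by omega) le_rfl] at he
    · rwa [hMeq 1 le_rfl (by omega)] at hm
    · intro j hj
      obtain ⟨hg1, hg2⟩ := hg j hj
      rw [hEeq (j + 1) (by omega) (by omega)] at hg1
      rw [hMeq (j + 2) (by omega) (by omega)] at hg2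
      exact ⟨hg1, hg2⟩
  · intro Z Z' e e' g g' m m' he hm hg hfac he' hm' hg' hfac'
    refine master_unique hOFS' hchain' n f Z Z' e e' g g' m m' ?_ ?_ ?_ hfac ?_ ?_ ?_ hfac'
    · rwa [hEeq (n + 1) (by omega) le_rfl]
    · rwa [hMeq 1 le_rfl (by omega)]
    · intro j hj
      rw [hEeq (j + 1) (by omega) (by omega), hMeq (j + 2) (by omega) (by omega)]
      exact hg j hj
    · rwa [hEeq (n + 1) (by omega) le_rfl]
    · rwa [hMeq 1 le_rfl (by omega)]
    · intro j hj
      rw [hEeq (j + 1) (by omega) (by omega), hMeq (j + 2) (by omega) (by omega)]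
      exact hg' j hj
end

section
/- Let T be a monad on a category C and let (E, M) be an orthogonal factorization system on C such that the underlying endofunctor of T preserves the class E (if e ∈ E then T.map e ∈ E). Let U : Algebra T ⥤ C denote the forgetful functor from the Eilenberg–Moore category of T-algebras. Then the classes E' = { f | U.map f ∈ E } and M' = { f | U.map f ∈ M } form an orthogonal factorization system on Algebra T: every morphism of T-algebras factors as a morphism in E' followed by a morphism in M', each class contains all isomorphisms and is closed under composition, and every morphism in E' is strongly orthogonal (in Algebra T) to every morphism in M'. -/
open CategoryTheory

universe v u

/-- If `T` is a monad on `C` whose underlying endofunctor preserves the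
left class of an orthogonal factorization system `(E, M)` on `C`, then the preimages of
`E` and `M` under the forgetful functor from the Eilenberg–Moore category of
`T`-algebras form an orthogonal factorization system on `Monad.Algebra T`. -/
theorem ofs_lifts_to_algebras {C : Type u} [Category.{v} C] (T : Monad C)
    (E M : MorphismProperty C) (h : IsOFS E M)
    (hT : ∀ {X Y : C} (e : X ⟶ Y), E e → E (T.toFunctor.map e)) :
    IsOFS (C := Monad.Algebra T)
      (fun _ _ f => E ((Monad.forget T).map f))
      (fun _ _ f => M ((Monad.forget T).map f)) := by
  constructor
  · intro X Y f hf
    haveI := hf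
    exact h.iso_mem_E _ inferInstance
  · intro X Y f hf
    haveI := hf
    exact h.iso_mem_M _ inferInstance
  · intro X Y Z f g hf hg
    exact h.comp_mem_E _ _ hf hg
  · intro X Y Z f g hf hg
    exact h.comp_mem_M _ _ hf hg
  · -- factorization
    intro X Y f
    obtain ⟨F, e, m, hE, hM, hc⟩ := h.fact f.f
    -- construct the algebra structure on F
    obtain ⟨d, ⟨hd1, hd2⟩, hduniq⟩ :=
      h.orth (T.toFunctor.map e) m (hT e hE) hM (X.a ≫ e) (T.toFunctor.map m ≫ Y.a)
        (by
          rw [Category.assoc, hc, ← Monad.Algebra.Hom.h f, ← hc, T.toFunctor.map_comp,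
            Category.assoc])
    have hunit : T.η.app F ≫ d = 𝟙 F := by
      obtain ⟨d', hd', hd'uniq⟩ := h.orth e m hE hM e m rfl
      have h1 : e ≫ (T.η.app F ≫ d) = e ∧ (T.η.app F ≫ d) ≫ m = m := by
        constructor
        · have := T.η.naturality e
          simp only [Functor.id_map] at this
          rw [← Category.assoc, this, Category.assoc, hd1, ← Category.assoc, X.unit]
          simp
        · rw [Category.assoc, hd2, ← Category.assoc]
          have := T.η.naturality m
          simp only [Functor.id_map] at this
          rw [← this, Category.assoc, Y.unit]
          simp
      have h2 : e ≫ (𝟙 F) = e ∧ (𝟙 F) ≫ m = m := by simp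
      rw [hd'uniq _ h1, hd'uniq _ h2]
    have hassoc : T.μ.app F ≫ d = T.toFunctor.map d ≫ d := by
      obtain ⟨d', hd', hd'uniq⟩ :=
        h.orth (T.toFunctor.map (T.toFunctor.map e)) m (hT _ (hT e hE)) hM
          (T.toFunctor.map X.a ≫ X.a ≫ e)
          (T.toFunctor.map (T.toFunctor.map m) ≫ T.toFunctor.map Y.a ≫ Y.a)
          (by
            have key : X.a ≫ f.f = T.toFunctor.map f.f ≫ Y.a :=
              (Monad.Algebra.Hom.h f).symm
            simp only [Category.assoc, hc]
            rw [key, ← Category.assoc, ← T.toFunctor.map_comp, key, ← hc]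
            simp [Functor.map_comp, Category.assoc])
      have h1 : T.toFunctor.map (T.toFunctor.map e) ≫ (T.μ.app F ≫ d)
            = T.toFunctor.map X.a ≫ X.a ≫ e ∧
          (T.μ.app F ≫ d) ≫ m
            = T.toFunctor.map (T.toFunctor.map m) ≫ T.toFunctor.map Y.a ≫ Y.a := by
        constructor
        · have := T.μ.naturality e
          simp only [Functor.comp_map] at this
          rw [← Category.assoc, this, Category.assoc, hd1, ← Category.assoc,
            X.assoc, Category.assoc]
        · rw [Category.assoc, hd2, ← Category.assoc]
          have := T.μ.naturality m
          simp only [Functor.comp_map] at this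
          rw [← this, Category.assoc, Y.assoc]
      have h2 : T.toFunctor.map (T.toFunctor.map e) ≫ (T.toFunctor.map d ≫ d)
            = T.toFunctor.map X.a ≫ X.a ≫ e ∧
          (T.toFunctor.map d ≫ d) ≫ m
            = T.toFunctor.map (T.toFunctor.map m) ≫ T.toFunctor.map Y.a ≫ Y.a := by
        constructor
        · rw [← Category.assoc, ← T.toFunctor.map_comp, hd1, T.toFunctor.map_comp,
            Category.assoc, hd1]
        · rw [Category.assoc, hd2, ← Category.assoc, ← T.toFunctor.map_comp, hd2,
            T.toFunctor.map_comp, Category.assoc]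
      rw [hd'uniq _ h1, hd'uniq _ h2]
    refine ⟨⟨F, d, hunit, hassoc⟩, ⟨e, hd1⟩, ⟨m, hd2.symm⟩, hE, hM, ?_⟩
    apply Monad.Algebra.Hom.ext
    exact hc
  · -- orthogonality
    intro A B X Y e m hE hM u v hsq
    have hsq' : u.f ≫ m.f = e.f ≫ v.f := congrArg Monad.Algebra.Hom.f hsq
    obtain ⟨d, ⟨hd1, hd2⟩, hduniq⟩ := h.orth e.f m.f hE hM u.f v.f hsq'
    -- d is an algebra morphism
    have halg : T.toFunctor.map d ≫ X.a = B.a ≫ d := by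
      obtain ⟨d', hd', hd'uniq⟩ :=
        h.orth (T.toFunctor.map e.f) m.f (hT e.f hE) hM
          (T.toFunctor.map u.f ≫ X.a) (B.a ≫ v.f)
          (by
            rw [Category.assoc, ← Monad.Algebra.Hom.h m, ← Category.assoc,
              ← T.toFunctor.map_comp, hsq', T.toFunctor.map_comp]
            simp)
      have h1 : T.toFunctor.map e.f ≫ (T.toFunctor.map d ≫ X.a)
            = T.toFunctor.map u.f ≫ X.a ∧
          (T.toFunctor.map d ≫ X.a) ≫ m.f = B.a ≫ v.f := by
        constructor
        · rw [← Category.assoc, ← T.toFunctor.map_comp, hd1]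
        · rw [Category.assoc, ← Monad.Algebra.Hom.h m, ← Category.assoc,
            ← T.toFunctor.map_comp, hd2]
          exact Monad.Algebra.Hom.h v
      have h2 : T.toFunctor.map e.f ≫ (B.a ≫ d)
            = T.toFunctor.map u.f ≫ X.a ∧
          (B.a ≫ d) ≫ m.f = B.a ≫ v.f := by
        constructor
        · rw [← Category.assoc, Monad.Algebra.Hom.h e, Category.assoc, hd1,
            Monad.Algebra.Hom.h u]
        · rw [Category.assoc, hd2]
      rw [hd'uniq _ h1, hd'uniq _ h2]
    refine ⟨⟨d, halg⟩, ⟨?_, ?_⟩, ?_⟩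
    · exact Monad.Algebra.Hom.ext hd1
    · exact Monad.Algebra.Hom.ext hd2
    · intro y hy
      apply Monad.Algebra.Hom.ext
      exact hduniq y.f ⟨congrArg Monad.Algebra.Hom.f hy.1, congrArg Monad.Algebra.Hom.f hy.2⟩
end

section
/- Let D be a pretriangulated category and let (D≥0, D<0) be a t-structure on D. Then the heart of the t-structure — the full subcategory of D on the objects X such that X ∈ D≥0 and X⟦-1⟧ ∈ D<0 — is an abelian category (with the additive structure inherited from D). -/
open CategoryTheory CategoryTheory.Limits CategoryTheory.Pretriangulated ZeroObject

universe v u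

namespace HeartAbelianAux

open CategoryTheory.Triangulated CategoryTheory.Triangulated.TStructure

variable {C : Type u} [Category.{v} C] [HasZeroObject C] [Preadditive C]
  [HasShift C ℤ] [∀ n : ℤ, (shiftFunctor C n).Additive] [Pretriangulated C]
variable (t : TStructure C)

lemma tzero {X Y : C} (f : X ⟶ Y) (n₀ n₁ : ℤ) (h : n₀ < n₁)
    (hX : t.le n₀ X) (hY : t.ge n₁ Y) : f = 0 := by
  have hX' : t.le 0 (X⟦n₀⟧) := t.le_shift n₀ n₀ 0 (add_zero n₀) X hX
  have hY' : t.ge (n₁ - n₀) (Y⟦n₀⟧) := t.ge_shift n₁ n₀ (n₁ - n₀) (by omega) Y hY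
  have hY'' : t.ge 1 (Y⟦n₀⟧) := t.ge_antitone (by omega : (1:ℤ) ≤ n₁ - n₀) _ hY'
  have h0 : (shiftFunctor C n₀).map f = 0 := t.zero' _ hX' hY''
  apply (shiftFunctor C n₀).map_injective
  rw [h0, Functor.map_zero]

lemma mem_LE_of_orth (X : C) (n : ℤ)
    (h : ∀ (Y : C), t.ge (n + 1) Y → ∀ (f : X ⟶ Y), f = 0) : t.le n X := by
  obtain ⟨A, B, hA, hB, f, g, w, hT⟩ := t.exists_triangle X n (n + 1) rfl
  have hg : g = 0 := h B hB g
  obtain ⟨p, hp⟩ := Triangle.yoneda_exact₃ _ hT (𝟙 B) (by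
    show g ≫ 𝟙 B = 0
    rw [hg, zero_comp])
  have hp0 : p = 0 := tzero t p (n - 1) (n + 1) (by omega)
    (t.le_shift n 1 (n - 1) (by omega) A hA) hB
  have : IsZero B := by
    rw [IsZero.iff_id_eq_zero, hp, hp0, comp_zero]; rfl
  have : IsIso f := (Triangle.isZero₃_iff_isIso₁ _ hT).1 this
  exact (t.le n).prop_of_iso (asIso f) hA

lemma mem_GE_of_orth (X : C) (n : ℤ)
    (h : ∀ (Y : C), t.le (n - 1) Y → ∀ (f : Y ⟶ X), f = 0) : t.ge n X := by
  obtain ⟨A, B, hA, hB, f, g, w, hT⟩ := t.exists_triangle X (n - 1) n (by omega)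
  have hf : f = 0 := h A hA f
  obtain ⟨p, hp⟩ := Triangle.coyoneda_exact₁ _ hT (𝟙 (A⟦(1 : ℤ)⟧)) (by
    show 𝟙 (A⟦(1 : ℤ)⟧) ≫ f⟦(1 : ℤ)⟧' = 0
    rw [hf, Functor.map_zero, comp_zero])
  have hp0 : p = 0 := tzero t p (n - 2) n (by omega)
    (t.le_shift (n - 1) 1 (n - 2) (by omega) A hA) hB
  have hz : IsZero (A⟦(1 : ℤ)⟧) := by
    rw [IsZero.iff_id_eq_zero, hp, hp0, zero_comp]; rfl
  have hzA : IsZero A := by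
    rw [IsZero.iff_id_eq_zero]
    apply (shiftFunctor C (1 : ℤ)).map_injective
    rw [CategoryTheory.Functor.map_id, Functor.map_zero]
    exact hz.eq_of_src _ _
  have : IsIso g := (Triangle.isZero₁_iff_isIso₂ _ hT).1 hzA
  exact (t.ge n).prop_of_iso (asIso g).symm hB

lemma le_of_isZero {X : C} (h : IsZero X) (n : ℤ) : t.le n X :=
  mem_LE_of_orth t X n (fun _ _ f => h.eq_of_src f 0)

lemma ge_of_isZero {X : C} (h : IsZero X) (n : ℤ) : t.ge n X :=
  mem_GE_of_orth t X n (fun _ _ f => h.eq_of_tgt f 0)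

lemma le₂ (T : Triangle C) (hT : T ∈ distTriang C) (n : ℤ)
    (h₁ : t.le n T.obj₁) (h₃ : t.le n T.obj₃) : t.le n T.obj₂ := by
  apply mem_LE_of_orth
  intro Y hY f
  have h1 : T.mor₁ ≫ f = 0 := tzero t _ n (n + 1) (by omega) h₁ hY
  obtain ⟨g, rfl⟩ := Triangle.yoneda_exact₂ _ hT f h1
  rw [tzero t g n (n + 1) (by omega) h₃ hY, comp_zero]

lemma ge₂ (T : Triangle C) (hT : T ∈ distTriang C) (n : ℤ)
    (h₁ : t.ge n T.obj₁) (h₃ : t.ge n T.obj₃) : t.ge n T.obj₂ := by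
  apply mem_GE_of_orth
  intro Y hY f
  have h1 : f ≫ T.mor₂ = 0 := tzero t _ (n - 1) n (by omega) hY h₃
  obtain ⟨g, rfl⟩ := Triangle.coyoneda_exact₂ _ hT f h1
  rw [tzero t g (n - 1) n (by omega) hY h₁, zero_comp]

/-- epi-like extensionality: maps out of `obj₃` are determined by restriction to `obj₂`. -/
lemma ext₃ (T : Triangle C) (hT : T ∈ distTriang C) (h₁ : t.le 0 T.obj₁)
    {W : C} (hW : t.ge 0 W) (φ : T.obj₃ ⟶ W) (hφ : T.mor₂ ≫ φ = 0) : φ = 0 := by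
  obtain ⟨ε, rfl⟩ := Triangle.yoneda_exact₃ _ hT φ hφ
  rw [tzero t ε (-1) 0 (by omega) (t.le_shift 0 1 (-1) (by omega) _ h₁) hW, comp_zero]

/-- mono-like extensionality: maps into `obj₁` are determined by composition with `mor₁`. -/
lemma ext₁ (T : Triangle C) (hT : T ∈ distTriang C) (h₃ : t.ge 0 T.obj₃)
    {W : C} (hW : t.le 0 W) (φ : W ⟶ T.obj₁) (hφ : φ ≫ T.mor₁ = 0) : φ = 0 := by
  obtain ⟨σ, rfl⟩ := Triangle.coyoneda_exact₂ _ (inv_rot_of_distTriang _ hT) φ hφ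
  rw [tzero t σ 0 1 (by omega) hW (t.ge_shift 0 (-1) 1 (by omega) _ h₃), zero_comp]; rfl

/-- The heart predicate. -/
def heartP : C → Prop := fun X => t.le 0 X ∧ t.ge 0 X

/-- The heart. -/
abbrev Heart := ObjectProperty.FullSubcategory (heartP t)

variable {t}

section Main

variable {X Y : Heart t} (f : X ⟶ Y)

-- f is also a morphism X.obj ⟶ Y.obj in C.

lemma heart_hasZeroObject : HasZeroObject (Heart t) := by
  refine ⟨⟨⟨0, le_of_isZero t (isZero_zero C) 0, ge_of_isZero t (isZero_zero C) 0⟩, ?_⟩⟩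
  rw [IsZero.iff_id_eq_zero]
  exact ObjectProperty.hom_ext _ ((isZero_zero C).eq_of_src _ _)

lemma heart_hasBinaryBiproducts : HasBinaryBiproducts (Heart t) := by
  constructor
  intro P Q
  have hT := binaryBiproductTriangle_distinguished P.obj Q.obj
  have hle : t.le 0 (P.obj ⊞ Q.obj) := le₂ t _ hT 0 P.2.1 Q.2.1
  have hge : t.ge 0 (P.obj ⊞ Q.obj) := ge₂ t _ hT 0 P.2.2 Q.2.2
  exact HasBinaryBiproduct.mk
    { bicone :=
      { pt := ⟨P.obj ⊞ Q.obj, hle, hge⟩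
        fst := ObjectProperty.homMk (biprod.fst : P.obj ⊞ Q.obj ⟶ P.obj)
        snd := ObjectProperty.homMk (biprod.snd : P.obj ⊞ Q.obj ⟶ Q.obj)
        inl := ObjectProperty.homMk (biprod.inl : P.obj ⟶ P.obj ⊞ Q.obj)
        inr := ObjectProperty.homMk (biprod.inr : Q.obj ⟶ P.obj ⊞ Q.obj)
        inl_fst := ObjectProperty.hom_ext _ biprod.inl_fst
        inl_snd := ObjectProperty.hom_ext _ biprod.inl_snd
        inr_fst := ObjectProperty.hom_ext _ biprod.inr_fst
        inr_snd := ObjectProperty.hom_ext _ biprod.inr_snd }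
      isBilimit := isBinaryBilimitOfTotal _ (ObjectProperty.hom_ext _ biprod.total) }

variable (t)

lemma cokernel_core {X Y : C} (hX : heartP t X) (hY : heartP t Y) (fC : X ⟶ Y) :
    ∃ (Q : C) (_ : heartP t Q) (c : Y ⟶ Q), fC ≫ c = 0 ∧
      (∀ (W : C), heartP t W → ∀ (k : Y ⟶ W), fC ≫ k = 0 → ∃ l : Q ⟶ W, c ≫ l = k) ∧
      (∀ (W : C), heartP t W → ∀ (m : Q ⟶ W), c ≫ m = 0 → m = 0) := by
  obtain ⟨Z, g, h, hT⟩ := Pretriangulated.distinguished_cocone_triangle fC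
  have hZle : t.le 0 Z := le₂ t _ (rot_of_distTriang _ hT) 0 hY.1
    (t.le_monotone (by omega : (-1:ℤ) ≤ 0) _ (t.le_shift 0 1 (-1) (by omega) _ hX.1))
  obtain ⟨A, Q, hA, hQ, a, q, w', hT'⟩ := t.exists_triangle Z (-1) 0 (by omega)
  have hQle : t.le 0 Q := le₂ t _ (rot_of_distTriang _ hT') 0 hZle
    (t.le_monotone (by omega : (-2:ℤ) ≤ 0) _ (t.le_shift (-1) 1 (-2) (by omega) _ hA))
  refine ⟨Q, ⟨hQle, hQ⟩, g ≫ q, ?_, ?_, ?_⟩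
  · have h12 : fC ≫ g = 0 := comp_distTriang_mor_zero₁₂ _ hT
    rw [← Category.assoc, h12, zero_comp]
  · intro W hW k hk
    obtain ⟨α, hα⟩ := Triangle.yoneda_exact₂ _ hT k hk
    obtain ⟨β, hβ⟩ := Triangle.yoneda_exact₂ _ hT' α
      (tzero t _ (-1) 0 (by omega) hA hW.2)
    have hα' : k = g ≫ α := hα
    have hβ' : α = q ≫ β := hβ
    exact ⟨β, by erw [Category.assoc, ← hβ', ← hα']⟩
  · intro W hW m hm
    rw [Category.assoc] at hm
    have h1 : q ≫ m = 0 := ext₃ t _ hT hX.1 hW.2 _ hm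
    exact ext₃ t _ hT' (t.le_monotone (by omega : (-1:ℤ) ≤ 0) _ hA) hW.2 m h1

lemma kernel_core {X Y : C} (hX : heartP t X) (hY : heartP t Y) (fC : X ⟶ Y) :
    ∃ (K : C) (_ : heartP t K) (k : K ⟶ X), k ≫ fC = 0 ∧
      (∀ (W : C), heartP t W → ∀ (φ : W ⟶ X), φ ≫ fC = 0 → ∃ l : W ⟶ K, l ≫ k = φ) ∧
      (∀ (W : C), heartP t W → ∀ (m : W ⟶ K), m ≫ k = 0 → m = 0) := by
  obtain ⟨Z, g, h, hT⟩ := Pretriangulated.distinguished_cocone_triangle fC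
  have hZge : t.ge (-1) Z := ge₂ t _ (rot_of_distTriang _ hT) (-1)
    (t.ge_antitone (by omega : (-1:ℤ) ≤ 0) _ hY.2) (t.ge_shift 0 1 (-1) (by omega) _ hX.2)
  have hU := inv_rot_of_distTriang _ hT
  obtain ⟨K, B, hK, hB, e₁, e₂, w'', hT''⟩ := t.exists_triangle (Z⟦(-1:ℤ)⟧) 0 1 (by omega)
  have hKge : t.ge 0 K := ge₂ t _ (inv_rot_of_distTriang _ hT'') 0
    (t.ge_antitone (by omega : (0:ℤ) ≤ 2) _ (t.ge_shift 1 (-1) 2 (by omega) _ hB))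
    (t.ge_shift (-1) (-1) 0 (by omega) _ hZge)
  refine ⟨K, ⟨hK, hKge⟩, e₁ ≫ (Triangle.mk fC g h).invRotate.mor₁, ?_, ?_, ?_⟩
  · have h12 : (Triangle.mk fC g h).invRotate.mor₁ ≫ fC = 0 := comp_distTriang_mor_zero₁₂ _ hU
    erw [Category.assoc, h12, comp_zero]
  · intro W hW φ hφ
    obtain ⟨ψ, hψ⟩ := Triangle.coyoneda_exact₂ _ hU φ hφ
    obtain ⟨χ, hχ⟩ := Triangle.coyoneda_exact₂ _ hT'' ψ
      (tzero t _ 0 1 (by omega) hW.1 hB)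
    have hχ' : ψ = χ ≫ e₁ := hχ
    exact ⟨χ, by erw [← Category.assoc, ← hχ', ← hψ]⟩
  · intro W hW m hm
    erw [← Category.assoc] at hm
    have h1 : m ≫ e₁ = 0 := ext₁ t _ hU hY.2 hW.1 _ hm
    exact ext₁ t _ hT'' (t.ge_antitone (by omega : (0:ℤ) ≤ 1) _ hB) hW.1 m h1

lemma mono_core {X Y : C} (hX : heartP t X) (hY : heartP t Y) (fC : X ⟶ Y)
    (hker : ∀ (W : C), heartP t W → ∀ (φ : W ⟶ X), φ ≫ fC = 0 → φ = 0) :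
    ∃ (Z : C) (_ : heartP t Z) (g : Y ⟶ Z), fC ≫ g = 0 ∧
      (∀ (W : C), heartP t W → ∀ (φ : W ⟶ Y), φ ≫ g = 0 → ∃ l : W ⟶ X, l ≫ fC = φ) := by
  obtain ⟨Z, g, h, hT⟩ := Pretriangulated.distinguished_cocone_triangle fC
  have hZle : t.le 0 Z := le₂ t _ (rot_of_distTriang _ hT) 0 hY.1
    (t.le_monotone (by omega : (-1:ℤ) ≤ 0) _ (t.le_shift 0 1 (-1) (by omega) _ hX.1))
  have hZge : t.ge (-1) Z := ge₂ t _ (rot_of_distTriang _ hT) (-1)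
    (t.ge_antitone (by omega : (-1:ℤ) ≤ 0) _ hY.2) (t.ge_shift 0 1 (-1) (by omega) _ hX.2)
  have hU := inv_rot_of_distTriang _ hT
  obtain ⟨K, B, hK, hB, e₁, e₂, w'', hT''⟩ := t.exists_triangle (Z⟦(-1:ℤ)⟧) 0 1 (by omega)
  have hKge : t.ge 0 K := ge₂ t _ (inv_rot_of_distTriang _ hT'') 0
    (t.ge_antitone (by omega : (0:ℤ) ≤ 2) _ (t.ge_shift 1 (-1) 2 (by omega) _ hB))
    (t.ge_shift (-1) (-1) 0 (by omega) _ hZge)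
  have hkf : (e₁ ≫ (Triangle.mk fC g h).invRotate.mor₁) ≫ fC = 0 := by
    have h12 : (Triangle.mk fC g h).invRotate.mor₁ ≫ fC = 0 := comp_distTriang_mor_zero₁₂ _ hU
    erw [Category.assoc, h12, comp_zero]
  have hk0 : e₁ ≫ (Triangle.mk fC g h).invRotate.mor₁ = 0 := hker K ⟨hK, hKge⟩ _ hkf
  have he₁ : e₁ = 0 := ext₁ t _ hU hY.2 hK _ hk0
  have hKzero : IsZero K := by
    rw [IsZero.iff_id_eq_zero]
    apply ext₁ t _ hT'' (t.ge_antitone (by omega : (0:ℤ) ≤ 1) _ hB) hK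
    show 𝟙 K ≫ e₁ = 0
    rw [Category.id_comp]
    exact he₁
  have hiso : IsIso e₂ := (Triangle.isZero₁_iff_isIso₂ _ hT'').1 hKzero
  have hZge0 : t.ge 0 Z := (t.ge 0).prop_of_iso ((shiftEquiv C (1:ℤ)).counitIso.app Z)
    (t.ge_shift 1 1 0 (by omega) _ ((t.ge 1).prop_of_iso (asIso e₂).symm hB))
  refine ⟨Z, ⟨hZle, hZge0⟩, g, comp_distTriang_mor_zero₁₂ _ hT, ?_⟩
  intro W hW φ hφ
  obtain ⟨l, hl⟩ := Triangle.coyoneda_exact₂ _ hT φ hφ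
  exact ⟨l, hl.symm⟩

lemma epi_core {X Y : C} (hX : heartP t X) (hY : heartP t Y) (fC : X ⟶ Y)
    (hcoker : ∀ (W : C), heartP t W → ∀ (k : Y ⟶ W), fC ≫ k = 0 → k = 0) :
    ∃ (Kn : C) (_ : heartP t Kn) (g : Kn ⟶ X), g ≫ fC = 0 ∧
      (∀ (W : C), heartP t W → ∀ (k : X ⟶ W), g ≫ k = 0 → ∃ l : Y ⟶ W, fC ≫ l = k) := by
  obtain ⟨Z, g, h, hT⟩ := Pretriangulated.distinguished_cocone_triangle fC
  have hZle : t.le 0 Z := le₂ t _ (rot_of_distTriang _ hT) 0 hY.1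
    (t.le_monotone (by omega : (-1:ℤ) ≤ 0) _ (t.le_shift 0 1 (-1) (by omega) _ hX.1))
  have hZge : t.ge (-1) Z := ge₂ t _ (rot_of_distTriang _ hT) (-1)
    (t.ge_antitone (by omega : (-1:ℤ) ≤ 0) _ hY.2) (t.ge_shift 0 1 (-1) (by omega) _ hX.2)
  have hU := inv_rot_of_distTriang _ hT
  obtain ⟨A, Q, hA, hQ, a, q, w', hT'⟩ := t.exists_triangle Z (-1) 0 (by omega)
  have hQle : t.le 0 Q := le₂ t _ (rot_of_distTriang _ hT') 0 hZle
    (t.le_monotone (by omega : (-2:ℤ) ≤ 0) _ (t.le_shift (-1) 1 (-2) (by omega) _ hA))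
  have hfc : fC ≫ (g ≫ q) = 0 := by
    have h12 : fC ≫ g = 0 := comp_distTriang_mor_zero₁₂ _ hT
    rw [← Category.assoc, h12, zero_comp]
  have hc0 : g ≫ q = 0 := hcoker Q ⟨hQle, hQ⟩ _ hfc
  have hq0 : q = 0 := ext₃ t _ hT hX.1 hQ _ hc0
  have hQzero : IsZero Q := by
    rw [IsZero.iff_id_eq_zero]
    apply ext₃ t _ hT' (t.le_monotone (by omega : (-1:ℤ) ≤ 0) _ hA) hQ
    show q ≫ 𝟙 Q = 0
    rw [Category.comp_id]
    exact hq0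
  have hiso : IsIso a := (Triangle.isZero₃_iff_isIso₁ _ hT').1 hQzero
  have hZle' : t.le (-1) Z := (t.le (-1)).prop_of_iso (asIso a) hA
  have hZnle : t.le 0 (Z⟦(-1:ℤ)⟧) := t.le_shift (-1) (-1) 0 (by omega) _ hZle'
  have hZnge : t.ge 0 (Z⟦(-1:ℤ)⟧) := t.ge_shift (-1) (-1) 0 (by omega) _ hZge
  refine ⟨Z⟦(-1:ℤ)⟧, ⟨hZnle, hZnge⟩, (Triangle.mk fC g h).invRotate.mor₁,
    comp_distTriang_mor_zero₁₂ _ hU, ?_⟩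
  intro W hW k hk
  obtain ⟨l, hl⟩ := Triangle.yoneda_exact₂ _ hU k hk
  exact ⟨l, hl.symm⟩

lemma heart_hasCokernels : HasCokernels (Heart t) := by
  constructor
  intro X Y f
  obtain ⟨Q, hQ, c, hfc, hfac, huniq⟩ := cokernel_core t X.2 Y.2 f.hom
  let Qh : Heart t := ⟨Q, hQ⟩
  let ch : Y ⟶ Qh := ObjectProperty.homMk c
  have hfc' : f ≫ ch = 0 := ObjectProperty.hom_ext _ hfc
  have key : ∀ (W : Heart t) (k : Y ⟶ W), f ≫ k = 0 →
      ∃ (l : Qh ⟶ W), ch ≫ l = k := fun W k hk => by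
        obtain ⟨l, hl⟩ := hfac W.obj W.2 k.hom (congrArg InducedCategory.Hom.hom hk)
        exact ⟨ObjectProperty.homMk l, ObjectProperty.hom_ext _ hl⟩
  have uniqkey : ∀ (W : Heart t) (m m' : Qh ⟶ W),
      ch ≫ m = ch ≫ m' → m = m' := by
    intro W m m' hmm
    have h0 : c ≫ (show Q ⟶ W.obj from (m - m').hom) = 0 := by
      have : ch ≫ (m - m') = 0 := by
        rw [Preadditive.comp_sub, hmm, sub_self]
      exact congrArg InducedCategory.Hom.hom this
    have : m - m' = (0 : Qh ⟶ W) := ObjectProperty.hom_ext _ (huniq W.obj W.2 _ h0)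
    rw [← sub_eq_zero]; exact this
  exact HasColimit.mk ⟨CokernelCofork.ofπ ch hfc',
    CokernelCofork.IsColimit.ofπ _ hfc'
      (fun {W} k hk => (key W k hk).choose)
      (fun {W} k hk => (key W k hk).choose_spec)
      (fun {W} k hk m hm => uniqkey W _ _ (by rw [hm, (key W k hk).choose_spec]))⟩

lemma heart_hasKernels : HasKernels (Heart t) := by
  constructor
  intro X Y f
  obtain ⟨K, hK, k, hkf, hfac, huniq⟩ := kernel_core t X.2 Y.2 f.hom
  let Kh : Heart t := ⟨K, hK⟩
  let kh : Kh ⟶ X := ObjectProperty.homMk k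
  have hkf' : kh ≫ f = 0 := ObjectProperty.hom_ext _ hkf
  have key : ∀ (W : Heart t) (φ : W ⟶ X), φ ≫ f = 0 →
      ∃ (l : W ⟶ Kh), l ≫ kh = φ := fun W φ hφ => by
        obtain ⟨l, hl⟩ := hfac W.obj W.2 φ.hom (congrArg InducedCategory.Hom.hom hφ)
        exact ⟨ObjectProperty.homMk l, ObjectProperty.hom_ext _ hl⟩
  have uniqkey : ∀ (W : Heart t) (m m' : W ⟶ Kh),
      m ≫ kh = m' ≫ kh → m = m' := by
    intro W m m' hmm
    have h0 : (show W.obj ⟶ K from (m - m').hom) ≫ k = 0 := by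
      have : (m - m') ≫ kh = 0 := by
        rw [Preadditive.sub_comp, hmm, sub_self]
      exact congrArg InducedCategory.Hom.hom this
    have : m - m' = (0 : W ⟶ Kh) := ObjectProperty.hom_ext _ (huniq W.obj W.2 _ h0)
    rw [← sub_eq_zero]; exact this
  exact HasLimit.mk ⟨KernelFork.ofι kh hkf',
    KernelFork.IsLimit.ofι _ hkf'
      (fun {W} φ hφ => (key W φ hφ).choose)
      (fun {W} φ hφ => (key W φ hφ).choose_spec)
      (fun {W} φ hφ m hm => uniqkey W _ _ (by rw [hm, (key W φ hφ).choose_spec]))⟩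

lemma heart_normalMono {X Y : Heart t} (f : X ⟶ Y) [hm : Mono f] :
    Nonempty (NormalMono f) := by
  have hker : ∀ (W : C), heartP t W → ∀ (φ : W ⟶ X.obj), φ ≫ f.hom = 0 → φ = 0 := by
    intro W hW φ hφ
    let Wh : Heart t := ⟨W, hW⟩
    let φh : Wh ⟶ X := ObjectProperty.homMk φ
    have h2 : φh ≫ f = (0 : Wh ⟶ X) ≫ f := by rw [zero_comp]; exact ObjectProperty.hom_ext _ hφ
    exact congrArg InducedCategory.Hom.hom ((cancel_mono f).1 h2)
  obtain ⟨Z, hZ, g, hfg, hfac⟩ := mono_core t X.2 Y.2 f.hom hker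
  let Zh : Heart t := ⟨Z, hZ⟩
  let gh : Y ⟶ Zh := ObjectProperty.homMk g
  have w : f ≫ gh = 0 := ObjectProperty.hom_ext _ hfg
  refine ⟨{ Z := Zh, g := gh, w := w, isLimit := ?_ }⟩
  exact KernelFork.IsLimit.ofι' f w (fun {W} φ hφ =>
    ⟨ObjectProperty.homMk (hfac W.obj W.2 φ.hom (congrArg InducedCategory.Hom.hom hφ)).choose,
      ObjectProperty.hom_ext _ (hfac W.obj W.2 φ.hom (congrArg InducedCategory.Hom.hom hφ)).choose_spec⟩)

lemma heart_normalEpi {X Y : Heart t} (f : X ⟶ Y) [he : Epi f] :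
    Nonempty (NormalEpi f) := by
  let fc : X.obj ⟶ Y.obj := f.hom
  have hcoker : ∀ (W : C), heartP t W → ∀ (k : Y.obj ⟶ W), fc ≫ k = 0 → k = 0 := by
    intro W hW k hk
    let Wh : Heart t := ⟨W, hW⟩
    let kh : Y ⟶ Wh := ObjectProperty.homMk k
    have h2 : f ≫ kh = f ≫ (0 : Y ⟶ Wh) := by rw [comp_zero]; exact ObjectProperty.hom_ext _ hk
    exact congrArg InducedCategory.Hom.hom ((cancel_epi f).1 h2)
  obtain ⟨Kn, hKn, g, hgf, hfac⟩ := epi_core t X.2 Y.2 f.hom hcoker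
  let Knh : Heart t := ⟨Kn, hKn⟩
  let gh : Knh ⟶ X := ObjectProperty.homMk g
  have w : gh ≫ f = 0 := ObjectProperty.hom_ext _ hgf
  refine ⟨{ W := Knh, g := gh, w := w, isColimit := ?_ }⟩
  exact CokernelCofork.IsColimit.ofπ' f w (fun {W} k hk =>
    ⟨ObjectProperty.homMk (hfac W.obj W.2 k.hom (congrArg InducedCategory.Hom.hom hk)).choose,
      ObjectProperty.hom_ext _ (hfac W.obj W.2 k.hom (congrArg InducedCategory.Hom.hom hk)).choose_spec⟩)

lemma heart_abelian : Nonempty (Abelian (Heart t)) := by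
  letI : HasZeroObject (Heart t) := heart_hasZeroObject (t := t)
  letI : HasBinaryBiproducts (Heart t) := heart_hasBinaryBiproducts (t := t)
  letI : HasFiniteProducts (Heart t) := hasFiniteProducts_of_has_binary_and_terminal
  letI : HasKernels (Heart t) := heart_hasKernels t
  letI : HasCokernels (Heart t) := heart_hasCokernels t
  exact ⟨{ toPreadditive := inferInstance
           normalMonoOfMono := fun f hf => heart_normalMono t f (hm := hf)
           normalEpiOfEpi := fun f hf => heart_normalEpi t f (he := hf) }⟩

end Main

end HeartAbelianAux

/-- Let `D` be a pretriangulated category with a t-structure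
`(D≥0, D<0)`, given by classes of objects `GE` and `LT` that are closed under
isomorphism and satisfy: (i) every morphism from an object of `GE` to an object of
`LT` is zero; (ii) `GE` is closed under `X ↦ X⟦1⟧` and `LT` under `X ↦ X⟦-1⟧`;
(iii) every object fits into a distinguished triangle `A → X → B → A⟦1⟧` with `A ∈ GE`
and `B ∈ LT`. Then the heart — the full subcategory of objects `X` with `X ∈ GE` and
`X⟦-1⟧ ∈ LT` — is an abelian category. -/
theorem heart_is_abelian {D : Type u} [Category.{v} D] [HasZeroObject D] [Preadditive D]
    [HasShift D ℤ] [∀ n : ℤ, (shiftFunctor D n).Additive] [Pretriangulated D]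
    (GE LT : D → Prop)
    (hGEiso : ∀ {X Y : D}, (X ≅ Y) → GE X → GE Y)
    (hLTiso : ∀ {X Y : D}, (X ≅ Y) → LT X → LT Y)
    (horth : ∀ {X Y : D}, GE X → LT Y → ∀ f : X ⟶ Y, f = 0)
    (hGEshift : ∀ X : D, GE X → GE ((shiftFunctor D (1 : ℤ)).obj X))
    (hLTshift : ∀ X : D, LT X → LT ((shiftFunctor D (-1 : ℤ)).obj X))
    (hfact : ∀ X : D, ∃ (A B : D) (f : A ⟶ X) (g : X ⟶ B)
        (w : B ⟶ (shiftFunctor D (1 : ℤ)).obj A),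
        GE A ∧ LT B ∧ Triangle.mk f g w ∈ distTriang D) :
    Nonempty
      (Abelian (ObjectProperty.FullSubcategory fun X : D => GE X ∧ LT ((shiftFunctor D (-1 : ℤ)).obj X))) := by

  let t : CategoryTheory.Triangulated.TStructure D :=
  { le := fun n X => GE (X⟦n⟧)
    ge := fun n X => LT (X⟦n - 1⟧)
    le_isClosedUnderIsomorphisms := fun n => ⟨fun e hX => hGEiso ((shiftFunctor D n).mapIso e) hX⟩
    ge_isClosedUnderIsomorphisms := fun n =>
      ⟨fun e hX => hLTiso ((shiftFunctor D (n - 1)).mapIso e) hX⟩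
    le_shift := fun n a n' hh X hX => hGEiso ((shiftFunctorAdd' D a n' n hh).app X) hX
    ge_shift := fun n a n' hh X hX =>
      hLTiso ((shiftFunctorAdd' D a (n' - 1) (n - 1) (by omega)).app X) hX
    zero' := fun {X Y} f hX hY => by
      have hX' : GE X := hGEiso ((shiftFunctorZero D ℤ).app X) hX
      have hY : LT (Y⟦(1:ℤ) - 1⟧) := hY
      rw [show (1:ℤ) - 1 = 0 by norm_num] at hY
      have hY' : LT Y := hLTiso ((shiftFunctorZero D ℤ).app Y) hY
      exact horth hX' hY' f
    le_zero_le := fun X hX =>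
      hGEiso ((shiftFunctorAdd' D 0 1 1 (by norm_num)).symm.app X) (hGEshift _ hX)
    ge_one_le := fun X hX => by
      have hX : LT (X⟦(1:ℤ) - 1⟧) := hX
      rw [show (1:ℤ) - 1 = 0 by norm_num] at hX
      have h1 : LT X := hLTiso ((shiftFunctorZero D ℤ).app X) hX
      have h2 : LT (X⟦(-1:ℤ)⟧) := hLTshift X h1
      show LT (X⟦(0:ℤ) - 1⟧)
      rw [show (0:ℤ) - 1 = -1 by norm_num]
      exact h2
    exists_triangle_zero_one := fun A => by
      obtain ⟨Xa, B, ff, gg, ww, hGEX, hLTB, hdT⟩ := hfact A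
      refine ⟨Xa, B, ?_, ?_, ff, gg, ww, hdT⟩
      · exact hGEiso ((shiftFunctorZero D ℤ).symm.app Xa) hGEX
      · show LT (B⟦(1:ℤ) - 1⟧)
        rw [show (1:ℤ) - 1 = 0 by norm_num]
        exact hLTiso ((shiftFunctorZero D ℤ).symm.app B) hLTB }
  have hP : (fun X : D => GE X ∧ LT ((shiftFunctor D (-1 : ℤ)).obj X))
      = HeartAbelianAux.heartP t := by
    funext X
    apply propext
    constructor
    · rintro ⟨h1, h2⟩
      refine ⟨hGEiso ((shiftFunctorZero D ℤ).symm.app X) h1, ?_⟩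
      show LT (X⟦(0:ℤ) - 1⟧)
      rw [show (0:ℤ) - 1 = -1 by norm_num]
      exact h2
    · rintro ⟨h1, h2⟩
      refine ⟨hGEiso ((shiftFunctorZero D ℤ).app X) h1, ?_⟩
      have h2' : LT (X⟦(0:ℤ) - 1⟧) := h2
      rw [show (0:ℤ) - 1 = -1 by norm_num] at h2'
      exact h2'
  rw [hP]
  exact HeartAbelianAux.heart_abelian t
end

section
/- Let C be a category with all finite limits and all finite colimits in which the 'pullout axiom' holds in the 1-categorical sense: a commutative square of C is a pushout square if and only if it is a pullback square. Then C is equivalent to the terminal category; equivalently, C has a zero object and every object of C is a zero object (all hom-sets of C are singletons). -/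
open CategoryTheory CategoryTheory.Limits

universe v u

section Aux

variable {C : Type u} [Category.{v} C]

/-- If `f` is epi, the square `f, f, 𝟙, 𝟙` is a pushout. -/
lemma aux_isPushout_of_epi {X Y : C} (f : X ⟶ Y) [Epi f] :
    IsPushout f f (𝟙 Y) (𝟙 Y) := by
  refine IsPushout.of_isColimit' ⟨rfl⟩ ?_
  refine PushoutCocone.IsColimit.mk _ (fun s => s.inl) (fun s => Category.id_comp _)
    (fun s => ?_) (fun s m h₁ h₂ => ?_)
  · rw [Category.id_comp, ← cancel_epi f, s.condition]
  · simpa using h₁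

/-- From a pullback square `f, f, 𝟙, 𝟙` we get that `f` is an iso. -/
lemma aux_isIso_of_isPullback {X Y : C} (f : X ⟶ Y)
    (h : IsPullback f f (𝟙 Y) (𝟙 Y)) : IsIso f := by
  refine ⟨h.lift (𝟙 Y) (𝟙 Y) rfl, ?_, h.lift_fst _ _ _⟩
  apply h.hom_ext <;> simp [h.lift_fst, h.lift_snd]

/-- From a pushout square `𝟙, 𝟙, f, f` we get that `f` is an iso. -/
lemma aux_isIso_of_isPushout {X Y : C} (f : X ⟶ Y)
    (h : IsPushout (𝟙 X) (𝟙 X) f f) : IsIso f := by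
  refine ⟨h.desc (𝟙 X) (𝟙 X) rfl, h.inl_desc _ _ _, ?_⟩
  apply h.hom_ext <;> simp [h.inl_desc, h.inr_desc]

end Aux

/-- If a category `C` with all finite limits and finite colimits satisfies
the 1-categorical 'pullout axiom' — a commutative square is a pushout if and only if it
is a pullback — then `C` has a zero object and every object of `C` is a zero object
(i.e. `C` is equivalent to the terminal category). -/
theorem pullout_axiom_forces_trivial {C : Type u} [Category.{v} C]
    [HasFiniteLimits C] [HasFiniteColimits C]
    (pullout : ∀ {W X Y Z : C} (f : W ⟶ X) (g : W ⟶ Y) (h : X ⟶ Z) (i : Y ⟶ Z),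
      IsPushout f g h i ↔ IsPullback f g h i) :
    HasZeroObject C ∧ ∀ X : C, IsZero X := by
  -- Every epi is an iso.
  have epi_iso : ∀ {X Y : C} (f : X ⟶ Y), Epi f → IsIso f := by
    intro X Y f hf
    exact aux_isIso_of_isPullback f ((pullout f f (𝟙 Y) (𝟙 Y)).mp (aux_isPushout_of_epi f))
  -- Every mono is an iso.
  have mono_iso : ∀ {X Y : C} (f : X ⟶ Y), Mono f → IsIso f := by
    intro X Y f hf
    exact aux_isIso_of_isPushout f
      ((pullout (𝟙 X) (𝟙 X) f f).mpr (IsKernelPair.id_of_mono f))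
  -- The codiagonal `⊤ ⨿ ⊤ ⟶ ⊤` is split epi, hence iso;
  -- therefore the two coproduct injections agree.
  have hsplit : IsSplitEpi (terminal.from ((⊤_ C) ⨿ (⊤_ C))) :=
    ⟨⟨⟨coprod.inl, terminal.hom_ext _ _⟩⟩⟩
  have hepi : Epi (terminal.from ((⊤_ C) ⨿ (⊤_ C))) := hsplit.epi
  have hiso : IsIso (terminal.from ((⊤_ C) ⨿ (⊤_ C))) := epi_iso _ hepi
  have hinj : (coprod.inl : (⊤_ C) ⟶ (⊤_ C) ⨿ (⊤_ C)) = coprod.inr := by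
    have := hiso
    rw [← cancel_mono (terminal.from ((⊤_ C) ⨿ (⊤_ C)))]
    exact terminal.hom_ext _ _
  -- The coproduct square over the initial object is a pushout, hence a pullback.
  have hpo : IsPushout (initial.to (⊤_ C)) (initial.to (⊤_ C))
      (coprod.inl : (⊤_ C) ⟶ (⊤_ C) ⨿ (⊤_ C)) coprod.inr := by
    refine IsPushout.of_isColimit' ⟨initial.hom_ext _ _⟩ ?_
    exact isPushoutOfIsInitialIsCoproduct _ _ _ _ initialIsInitial (coprodIsCoprod _ _)
  have hpb := (pullout _ _ _ _).mp hpo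
  -- Since the two injections agree, `(𝟙, 𝟙)` is a cone, giving a map `⊤ ⟶ ⊥`.
  have u : (⊤_ C) ⟶ (⊥_ C) := hpb.lift (𝟙 _) (𝟙 _) (by rw [hinj])
  -- The unique map `⊥ ⟶ ⊤` is split mono, hence iso: `⊥` is terminal as well.
  have hsm : IsSplitMono (initial.to (⊤_ C)) := ⟨⟨⟨u, initial.hom_ext _ _⟩⟩⟩
  have hmono : Mono (initial.to (⊤_ C)) := hsm.mono
  have hiso2 : IsIso (initial.to (⊤_ C)) := mono_iso _ hmono
  -- So `⊥` is a zero object.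
  have hzero : IsZero (⊥_ C) := by
    constructor
    · intro Y
      exact ⟨⟨⟨initial.to Y⟩, fun a => initial.hom_ext _ _⟩⟩
    · intro Y
      refine ⟨⟨⟨terminal.from Y ≫ inv (initial.to (⊤_ C))⟩, fun a => ?_⟩⟩
      rw [← cancel_mono (initial.to (⊤_ C))]
      exact terminal.hom_ext _ _
  -- Every object maps onto `⊥` by a split epi, hence is isomorphic to `⊥`.
  have hall : ∀ X : C, IsZero X := by
    intro X
    have q : X ⟶ (⊥_ C) := hzero.from_ X
    have hq : IsSplitEpi q := ⟨⟨⟨initial.to X, initial.hom_ext _ _⟩⟩⟩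
    have : IsIso q := epi_iso _ hq.epi
    exact hzero.of_iso (asIso q)
  exact ⟨⟨⟨⊥_ C, hzero⟩⟩, hall⟩
end
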